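/- Let I : ℝⁿ → ℝ be monotone, constant linear, and concave. Then for all a ∈ ℝⁿ, I(a) = min_{λ ∈ Λ} λ·a for some nonempty closed convex set Λ of probability vectors on {1,...,n} (i.e., λ_i ≥ 0, Σλ_i = 1). -/
import Mathlib

theorem stmt_10 (n : ℕ) (I : (Fin n → ℝ) → ℝ)
    (hmono : ∀ a b : Fin n → ℝ, (∀ i, a i ≤ b i) → I a ≤ I b)
    (hcl : ∀ (a : Fin n → ℝ) (β c : ℝ), 0 < β →
      I (fun i => β * a i + c) = β * I a + c)
    (hconc : ∀ (a b : Fin n → ℝ) (α : ℝ), α ∈ Set.Icc (0:ℝ) 1 →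
      α * I a + (1 - α) * I b ≤ I (fun i => α * a i + (1 - α) * b i)) :
    ∃ Λ : Set (Fin n → ℝ), Λ.Nonempty ∧ IsClosed Λ ∧ Convex ℝ Λ ∧
      (∀ l ∈ Λ, (∀ i, 0 ≤ l i) ∧ ∑ i, l i = 1) ∧
      ∀ a : Fin n → ℝ, IsLeast ((fun l : Fin n → ℝ => ∑ i, l i * a i) '' Λ) (I a) := by
  -- translation invariance
  have hadd : ∀ (a : Fin n → ℝ) (c : ℝ), I (fun i => a i + c) = I a + c := by
    intro a c
    have := hcl a 1 c one_pos
    simpa using this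
  -- Lipschitz, hence continuous
  have hcont : Continuous I := by
    have hL : LipschitzWith 1 I := by
      rw [lipschitzWith_iff_dist_le_mul]
      intro a b
      have key : ∀ u v : Fin n → ℝ, I u ≤ I v + dist u v := by
        intro u v
        have h1 : I u ≤ I (fun i => v i + dist u v) := by
          apply hmono
          intro i
          have hd := dist_le_pi_dist u v i
          rw [Real.dist_eq] at hd
          have h2 : u i - v i ≤ dist u v := (abs_le.mp hd).2
          linarith
        rw [hadd] at h1; exact h1
      have h1 := key a b
      have h2 := key b a
      rw [dist_comm b a] at h2
      rw [Real.dist_eq, NNReal.coe_one, one_mul, abs_le]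
      constructor <;> linarith
    exact hL.continuous
  -- per-point existence of a supporting "probability vector"
  have main : ∀ a : Fin n → ℝ, ∃ l : Fin n → ℝ, (∀ i, 0 ≤ l i) ∧ (∑ i, l i) = 1 ∧
      (∀ x, I x ≤ ∑ i, l i * x i) ∧ (∑ i, l i * a i) = I a := by
    intro a
    set H : Set ((Fin n → ℝ) × ℝ) := {p | p.2 < I p.1} with hH
    have hopen : IsOpen H := by
      have hc : Continuous fun p : (Fin n → ℝ) × ℝ => I p.1 - p.2 :=
        (hcont.comp continuous_fst).sub continuous_snd
      have ho : IsOpen {p : (Fin n → ℝ) × ℝ | (0:ℝ) < I p.1 - p.2} :=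
        isOpen_lt continuous_const hc
      convert ho using 1
      ext p
      simp [hH, sub_pos]
    have hconv : Convex ℝ H := by
      rintro p hp q hq α β hα hβ hαβ
      obtain rfl : β = 1 - α := by linarith
      simp only [hH, Set.mem_setOf_eq] at hp hq ⊢
      have hcc := hconc p.1 q.1 α ⟨hα, by linarith⟩
      have h1 : (α • p + (1 - α) • q).1 = fun i => α * p.1 i + (1 - α) * q.1 i := by
        funext i
        simp
      have h2 : (α • p + (1 - α) • q).2 = α * p.2 + (1 - α) * q.2 := rfl
      rw [h1, h2]
      rcases eq_or_lt_of_le hα with h | h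
      · rw [← h] at hcc ⊢
        simp only [zero_mul, zero_add, sub_zero, one_mul] at hcc ⊢
        linarith
      · have e1 : α * p.2 < α * I p.1 := by exact mul_lt_mul_of_pos_left hp h
        have e2 : (1 - α) * q.2 ≤ (1 - α) * I q.1 :=
          mul_le_mul_of_nonneg_left hq.le (by linarith)
        linarith
    have hnot : ((a, I a) : (Fin n → ℝ) × ℝ) ∉ H := by simp [hH]
    obtain ⟨f, hf⟩ := geometric_hahn_banach_open_point hconv hopen hnot
    set c : ℝ := f ((0 : Fin n → ℝ), (1 : ℝ)) with hc
    have hdec : ∀ (x : Fin n → ℝ) (t : ℝ), f (x, t) = f (x, 0) + t * c := by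
      intro x t
      have he : ((x, t) : (Fin n → ℝ) × ℝ) = (x, 0) + t • ((0 : Fin n → ℝ), (1 : ℝ)) := by
        ext <;> simp
      rw [he, map_add, map_smul, smul_eq_mul]
    have hcpos : (0:ℝ) < c := by
      have hmem : ((a, I a - 1) : (Fin n → ℝ) × ℝ) ∈ H := by
        simp [hH]
      have h1 := hf _ hmem
      rw [hdec a (I a - 1), hdec a (I a)] at h1
      have h2 : (I a - 1) * c = I a * c - c := by ring
      linarith
    have hc0 : c ≠ 0 := ne_of_gt hcpos
    have key : ∀ x : Fin n → ℝ, c * I x + f (x, 0) ≤ c * I a + f (a, 0) := by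
      intro x
      have step : ∀ ε : ℝ, 0 < ε → c * I x + f (x, 0) ≤ c * I a + f (a, 0) + ε := by
        intro ε hε
        have hmem : ((x, I x - ε / c) : (Fin n → ℝ) × ℝ) ∈ H := by
          simp only [hH, Set.mem_setOf_eq]
          have : 0 < ε / c := div_pos hε hcpos
          linarith
        have h1 := hf _ hmem
        rw [hdec x (I x - ε / c), hdec a (I a)] at h1
        have h2 : (I x - ε / c) * c = I x * c - ε := by
          field_simp
        rw [h2] at h1
        have e1 : c * I x = I x * c := mul_comm _ _
        have e2 : c * I a = I a * c := mul_comm _ _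
        linarith
      exact le_of_forall_pos_le_add step
    -- c * I a + f (a, 0) = 0 via positive homogeneity
    have hfa0 : c * I a + f (a, 0) = 0 := by
      have hhom : ∀ (x : Fin n → ℝ) (β : ℝ), 0 < β → I (fun i => β * x i) = β * I x := by
        intro x β hβ
        have := hcl x β 0 hβ
        simpa using this
      have hs : ∀ β : ℝ, f ((fun i => β * a i, 0) : (Fin n → ℝ) × ℝ) = β * f (a, 0) := by
        intro β
        have he : ((fun i => β * a i, 0) : (Fin n → ℝ) × ℝ) = β • ((a, 0) : (Fin n → ℝ) × ℝ) := by
          ext <;> simp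
        rw [he, map_smul, smul_eq_mul]
      have k2 := key (fun i => 2 * a i)
      rw [hhom a 2 (by norm_num), hs 2] at k2
      have k3 := key (fun i => (1/2 : ℝ) * a i)
      rw [hhom a (1/2) (by norm_num), hs (1/2)] at k3
      nlinarith [k2, k3]
    have hsup : ∀ x : Fin n → ℝ, c * I x + f (x, 0) ≤ 0 := by
      intro x; have := key x; linarith
    -- the candidate vector
    set l : Fin n → ℝ := fun i => -(f ((Pi.single i 1 : Fin n → ℝ), 0)) / c with hl
    have hdecomp : ∀ x : Fin n → ℝ, f (x, 0) = ∑ i, x i * f ((Pi.single i 1 : Fin n → ℝ), 0) := by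
      intro x
      have hsingle : ∀ i, x i • (Pi.single i 1 : Fin n → ℝ) = Pi.single i (x i) := by
        intro i
        funext j
        simp [Pi.single_apply]
      have he : ((x, (0:ℝ)) : (Fin n → ℝ) × ℝ)
          = ∑ i, x i • (((Pi.single i 1 : Fin n → ℝ), (0:ℝ)) : (Fin n → ℝ) × ℝ) := by
        rw [Prod.ext_iff]
        constructor
        · rw [Prod.fst_sum]
          simp only [Prod.smul_fst]
          rw [Finset.sum_congr rfl (fun i _ => hsingle i), Finset.univ_sum_single]
        · rw [Prod.snd_sum]
          simp
      rw [he, map_sum]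
      apply Finset.sum_congr rfl
      intro i _
      rw [map_smul, smul_eq_mul]
    have hlsum : ∀ x : Fin n → ℝ, (∑ i, l i * x i) = -(f (x, 0)) / c := by
      intro x
      have h1 : (∑ i, l i * x i)
          = ∑ i, -(x i * f ((Pi.single i 1 : Fin n → ℝ), 0)) / c :=
        Finset.sum_congr rfl (fun i _ => by rw [hl]; ring)
      rw [h1, ← Finset.sum_div, Finset.sum_neg_distrib, ← hdecomp x]
    have hIle : ∀ x : Fin n → ℝ, I x ≤ ∑ i, l i * x i := by
      intro x
      rw [hlsum x, le_div_iff₀ hcpos]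
      have := hsup x
      nlinarith [this]
    have hIeq : (∑ i, l i * a i) = I a := by
      rw [hlsum a, div_eq_iff hc0]
      nlinarith [hfa0]
    have hone : (∑ i, l i) = 1 := by
      have hfone : f ((fun _ => (1:ℝ)) , (0:ℝ)) = -c := by
        have harg : ∀ s : ℝ, ((fun i => a i + s, (0:ℝ)) : (Fin n → ℝ) × ℝ)
            = ((a, 0) : (Fin n → ℝ) × ℝ) + s • (((fun _ => (1:ℝ)), (0:ℝ)) : (Fin n → ℝ) × ℝ) := by
          intro s; ext <;> simp
        have hstep : ∀ s : ℝ, s * (c + f ((fun _ => (1:ℝ)), (0:ℝ))) ≤ 0 := by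
          intro s
          have k := key (fun i => a i + s)
          rw [hadd a s] at k
          rw [harg s, map_add, map_smul, smul_eq_mul] at k
          nlinarith [k]
        have hp := hstep 1
        have hm := hstep (-1)
        nlinarith [hp, hm]
      have h1 : (∑ i, l i) = -(f ((fun _ => (1:ℝ)), (0:ℝ))) / c := by
        have := hlsum (fun _ => (1:ℝ))
        simpa using this
      rw [h1, hfone]
      field_simp
    have hpos : ∀ i, 0 ≤ l i := by
      intro i
      have h1 : I a ≤ I (fun j => a j + (Pi.single i (1:ℝ) : Fin n → ℝ) j) := by
        apply hmono
        intro j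
        have hnn : (0:ℝ) ≤ (Pi.single i (1:ℝ) : Fin n → ℝ) j := by
          rw [Pi.single_apply]
          split <;> norm_num
        linarith
      have h2 := hIle (fun j => a j + (Pi.single i (1:ℝ) : Fin n → ℝ) j)
      have h4 : (∑ j, l j * (Pi.single i (1:ℝ) : Fin n → ℝ) j) = l i := by
        simp [Pi.single_apply]
      have h3 : (∑ j, l j * (a j + (Pi.single i (1:ℝ) : Fin n → ℝ) j))
          = (∑ j, l j * a j) + l i := by
        rw [Finset.sum_congr rfl
          (fun j _ => (mul_add (l j) (a j) ((Pi.single i (1:ℝ) : Fin n → ℝ) j))),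
          Finset.sum_add_distrib, h4]
      rw [h3, hIeq] at h2
      linarith
    exact ⟨l, hpos, hone, hIle, hIeq⟩
  -- assemble Λ
  set Λ : Set (Fin n → ℝ) :=
    {l | (∀ i, 0 ≤ l i) ∧ (∑ i, l i) = 1 ∧ ∀ x, I x ≤ ∑ i, l i * x i} with hΛ
  refine ⟨Λ, ?_, ?_, ?_, ?_, ?_⟩
  · obtain ⟨l, h1, h2, h3, _⟩ := main 0
    exact ⟨l, h1, h2, h3⟩
  · have hrw : Λ = (⋂ i, {l : Fin n → ℝ | 0 ≤ l i}) ∩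
        ({l : Fin n → ℝ | (∑ i, l i) = 1} ∩ ⋂ x, {l : Fin n → ℝ | I x ≤ ∑ i, l i * x i}) := by
      ext m
      simp [hΛ, Set.mem_iInter, forall_and]
    rw [hrw]
    refine (isClosed_iInter fun i => isClosed_le continuous_const (continuous_apply i)).inter
      (IsClosed.inter ?_ (isClosed_iInter fun x => isClosed_le continuous_const ?_))
    · exact isClosed_eq (continuous_finset_sum _ fun i _ => continuous_apply i) continuous_const
    · exact continuous_finset_sum _ fun i _ => (continuous_apply i).mul continuous_const
  · rintro p ⟨hp1, hp2, hp3⟩ q ⟨hq1, hq2, hq3⟩ α β hα hβ hαβ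
    refine ⟨fun i => ?_, ?_, fun x => ?_⟩
    · have : (α • p + β • q) i = α * p i + β * q i := rfl
      rw [this]
      have := mul_nonneg hα (hp1 i)
      have := mul_nonneg hβ (hq1 i)
      linarith
    · have : (∑ i, (α • p + β • q) i) = α * (∑ i, p i) + β * (∑ i, q i) := by
        rw [Finset.mul_sum, Finset.mul_sum, ← Finset.sum_add_distrib]
        rfl
      rw [this, hp2, hq2]; linarith
    · have hsum : (∑ i, (α • p + β • q) i * x i)
          = α * (∑ i, p i * x i) + β * (∑ i, q i * x i) := by
        rw [Finset.mul_sum, Finset.mul_sum, ← Finset.sum_add_distrib]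
        apply Finset.sum_congr rfl
        intro i _
        have : (α • p + β • q) i = α * p i + β * q i := rfl
        rw [this]; ring
      rw [hsum]
      have e1 := mul_le_mul_of_nonneg_left (hp3 x) hα
      have e2 := mul_le_mul_of_nonneg_left (hq3 x) hβ
      have e3 : α * I x + β * I x = I x := by rw [← add_mul, hαβ, one_mul]
      linarith
  · rintro m ⟨h1, h2, _⟩
    exact ⟨h1, h2⟩
  · intro a
    obtain ⟨l, h1, h2, h3, h4⟩ := main a
    constructor
    · exact ⟨l, ⟨h1, h2, h3⟩, h4⟩
    · rintro y ⟨m, hm, rfl⟩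
      exact hm.2.2 a
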